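/- (Correctness of the clearance heading construction, Eqs. 8–10.) Let p, q be points in the Euclidean plane ℝ², let r = dist(p, q), and let 0 < r_c < r. Set φ_h = arcsin(r_c/r), let u = (q − p)/r be the unit vector from p toward q, and define p_h = p + √(r² − r_c²) · R_{φ_h}(u), where R_{φ_h} is the rotation of the plane by angle φ_h. Then dist(q, p_h) = r_c and the vectors p_h − p and q − p_h are orthogonal (⟨p_h − p, q − p_h⟩ = 0); i.e., the ray from p through p_h is tangent to the circle of radius r_c centered at the obstacle point q. -/

import Mathlib

open scoped RealInnerProductSpace

/-- Correctness of the clearance heading construction (Eqs. 8–10): identifying the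
Euclidean plane with `ℂ` (rotation by angle `θ` being multiplication by `exp(θ·i)`), for a
vehicle at `p`, obstacle point `q` at distance `r = dist p q`, clearance radius
`0 < r_c < r`, `φ_h = arcsin(r_c/r)`, unit vector `u = (q − p)/r`, and candidate heading
point `p_h = p + √(r² − r_c²)·R_{φ_h}(u)`, one has `dist q p_h = r_c` and
`⟪p_h − p, q − p_h⟫ = 0`: the ray from `p` through `p_h` is tangent to the circle of
radius `r_c` about `q`. -/
theorem clearance_heading_tangent
    (p q : ℂ) (r r_c φ_h : ℝ) (u p_h : ℂ)
    (hr : r = dist p q) (hrc : 0 < r_c) (hrcr : r_c < r)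
    (hφh : φ_h = Real.arcsin (r_c / r))
    (hu : u = (q - p) / (r : ℂ))
    (hph : p_h = p + (Real.sqrt (r ^ 2 - r_c ^ 2) : ℂ) * (Complex.exp (φ_h * Complex.I) * u)) :
    dist q p_h = r_c ∧ ⟪p_h - p, q - p_h⟫ = 0 := by
  have hr0 : 0 < r := hrc.trans hrcr
  have hrne : (r : ℂ) ≠ 0 := by exact_mod_cast hr0.ne'
  set s : ℝ := Real.sqrt (r ^ 2 - r_c ^ 2) with hs
  have hs0 : 0 ≤ s := Real.sqrt_nonneg _
  have hs2 : s ^ 2 = r ^ 2 - r_c ^ 2 := Real.sq_sqrt (by nlinarith)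
  have hsin : Real.sin φ_h = r_c / r := by
    rw [hφh, Real.sin_arcsin]
    · nlinarith [div_nonneg hrc.le hr0.le]
    · rw [div_le_one hr0]; exact hrcr.le
  have hcos : Real.cos φ_h = s / r := by
    rw [hφh, Real.cos_arcsin, show 1 - (r_c / r) ^ 2 = (s / r) ^ 2 by
      rw [div_pow, div_pow, hs2]; field_simp]
    exact Real.sqrt_sq (div_nonneg hs0 hr0.le)
  have hqp : q - p = (r : ℂ) * u := by rw [hu]; field_simp
  have hexp : Complex.exp (φ_h * Complex.I) = ((s / r : ℝ) : ℂ) + ((r_c / r : ℝ) : ℂ) * Complex.I := by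
    rw [Complex.exp_mul_I, ← Complex.ofReal_cos, ← Complex.ofReal_sin, hcos, hsin]
  have hph' : p_h - p = ((s ^ 2 / r : ℝ) + (s * r_c / r : ℝ) * Complex.I) * u := by
    rw [hph, hexp]
    push_cast
    field_simp
    ring
  have hqph : q - p_h = ((r_c ^ 2 / r : ℝ) - (s * r_c / r : ℝ) * Complex.I) * u := by
    have : q - p_h = (q - p) - (p_h - p) := by ring
    rw [this, hqp, hph']
    have hs2c : (s : ℂ) ^ 2 = (r : ℂ) ^ 2 - (r_c : ℂ) ^ 2 := by exact_mod_cast hs2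
    push_cast
    field_simp
    linear_combination (-u) * hs2c
  have habsu : ‖u‖ = 1 := by
    rw [hu, norm_div, Complex.norm_real, Real.norm_eq_abs, abs_of_pos hr0, ← Complex.dist_eq, dist_comm, ← hr,
      div_self hr0.ne']
  constructor
  · rw [Complex.dist_eq, hqph, norm_mul, habsu, mul_one, Complex.norm_def, Complex.normSq_apply]
    simp only [Complex.sub_re, Complex.sub_im, Complex.ofReal_re, Complex.ofReal_im,
      Complex.mul_re, Complex.mul_im, Complex.I_re, Complex.I_im]
    conv_rhs => rw [← Real.sqrt_sq hrc.le]
    congr 1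
    field_simp
    nlinarith [hs2]
  · have hnsq : (starRingEnd ℂ) u * u = 1 := by
      rw [← Complex.normSq_eq_conj_mul_self, ← Complex.sq_norm, habsu]; norm_num
    rw [hph', hqph, Complex.inner]
    have key : (starRingEnd ℂ) ((((s ^ 2 / r : ℝ) : ℂ) + ((s * r_c / r : ℝ) : ℂ) * Complex.I) * u) *
        ((((r_c ^ 2 / r : ℝ) : ℂ) - ((s * r_c / r : ℝ) : ℂ) * Complex.I) * u) =
        (starRingEnd ℂ) (((s ^ 2 / r : ℝ) : ℂ) + ((s * r_c / r : ℝ) : ℂ) * Complex.I) *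
        ((((r_c ^ 2 / r : ℝ) : ℂ) - ((s * r_c / r : ℝ) : ℂ) * Complex.I)) := by
      rw [map_mul]
      linear_combination ((starRingEnd ℂ) (((s ^ 2 / r : ℝ) : ℂ) + ((s * r_c / r : ℝ) : ℂ) * Complex.I) *
        ((((r_c ^ 2 / r : ℝ) : ℂ) - ((s * r_c / r : ℝ) : ℂ) * Complex.I))) * hnsq
    rw [mul_comm _ ((starRingEnd ℂ) _), key]
    simp only [map_add, map_mul, map_sub, Complex.conj_ofReal, Complex.conj_I,
      Complex.mul_re, Complex.sub_re, Complex.add_re, Complex.sub_im, Complex.add_im,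
      Complex.mul_im, Complex.ofReal_re, Complex.ofReal_im, Complex.I_re, Complex.I_im,
      Complex.neg_re, Complex.neg_im, mul_neg, neg_mul, neg_neg]
    ring
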